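/- Let μ ∈ ℝ and σ > 0, and let f(x) = exp(−(ln x − μ)²/(2σ²)) / (x σ √(2π)) for x > 0 and f(x) = 0 otherwise, the density of the lognormal distribution with parameters μ and σ. Then −∫_ℝ f(x) log₂(|x| · f(x)) dx = log₂(σ · √(2πe)). In particular this value does not depend on μ. -/

import Mathlib

open Real MeasureTheory Set

/-- Differential floating-point entropy of the lognormal
distribution. -/
theorem fp_entropy_lognormal
    (μ σ : ℝ) (hσ : 0 < σ)
    (f : ℝ → ℝ)
    (hf : ∀ x, f x = if 0 < x then
      Real.exp (-(Real.log x - μ) ^ 2 / (2 * σ ^ 2)) / (x * σ * Real.sqrt (2 * π))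
      else 0) :
    -∫ x, f x * Real.logb 2 (|x| * f x)
      = Real.logb 2 (σ * Real.sqrt (2 * π * Real.exp 1)) := by
  have hπ : 0 < π := Real.pi_pos
  set c : ℝ := σ * Real.sqrt (2 * π) with hc_def
  have hc : 0 < c := by positivity
  set b : ℝ := (2 * σ ^ 2)⁻¹ with hb_def
  have hb : 0 < b := by positivity
  have hbinv : b⁻¹ = 2 * σ ^ 2 := by rw [hb_def, inv_inv]
  -- the two basic gaussian integrals
  have hA : (∫ z : ℝ, Real.exp (-b * z ^ 2)) = c := by
    rw [integral_gaussian, hc_def]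
    rw [div_eq_mul_inv, hbinv]
    rw [show π * (2 * σ ^ 2) = σ ^ 2 * (2 * π) by ring,
      Real.sqrt_mul (sq_nonneg σ), Real.sqrt_sq hσ.le]
  have hB : (∫ z : ℝ, z ^ 2 * Real.exp (-b * z ^ 2)) = σ ^ 2 * c := by
    have heven : (∫ z : ℝ, z ^ 2 * Real.exp (-b * z ^ 2))
        = 2 * ∫ z in Ioi (0:ℝ), z ^ 2 * Real.exp (-b * z ^ 2) := by
      rw [← integral_comp_abs (f := fun z => z ^ 2 * Real.exp (-b * z ^ 2))]
      congr 1 with x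
      rw [sq_abs]
    have hsub : (∫ z in Ioi (0:ℝ), z ^ 2 * Real.exp (-b * z ^ 2))
        = ∫ t in Ioi (0:ℝ), t ^ (1/2 : ℝ) * Real.exp (-(b * t)) / 2 := by
      rw [← integral_comp_rpow_Ioi_of_pos
        (g := fun t => t ^ (1/2 : ℝ) * Real.exp (-(b * t)) / 2) (p := 2) two_pos]
      refine setIntegral_congr_fun measurableSet_Ioi fun x hx => ?_
      have hx0 : (0:ℝ) < x := hx
      have h1 : (x ^ (2:ℝ)) ^ (1/2 : ℝ) = x := by
        rw [← Real.rpow_mul hx0.le]; norm_num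
      have h2 : x ^ (2:ℝ) = x ^ 2 := by
        rw [show (2:ℝ) = ((2:ℕ):ℝ) by norm_num, Real.rpow_natCast]
      rw [smul_eq_mul, show ((2:ℝ) - 1) = (1:ℝ) by norm_num, Real.rpow_one, h1, h2]
      ring
    have hgam : (∫ t in Ioi (0:ℝ), t ^ (1/2 : ℝ) * Real.exp (-(b * t)))
        = (1 / b) ^ (3/2 : ℝ) * Real.Gamma (3/2) := by
      have := integral_rpow_mul_exp_neg_mul_Ioi (a := 3/2) (r := b) (by norm_num) hb
      rw [show (3/2 : ℝ) - 1 = 1/2 by norm_num] at this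
      exact this
    have hgamval : Real.Gamma (3/2 : ℝ) = Real.sqrt π / 2 := by
      have : Real.Gamma ((1/2 : ℝ) + 1) = (1/2 : ℝ) * Real.Gamma (1/2) :=
        Real.Gamma_add_one (by norm_num)
      rw [show (3/2 : ℝ) = (1/2 : ℝ) + 1 by norm_num, this, Real.Gamma_one_half_eq]
      ring
    have hpow : ((1 : ℝ) / b) ^ (3/2 : ℝ) = 2 * σ ^ 2 * (Real.sqrt 2 * σ) := by
      rw [one_div, hbinv]
      have h2σ : (0:ℝ) < 2 * σ ^ 2 := by positivity
      rw [show (3/2 : ℝ) = 1 + 1/2 by norm_num, Real.rpow_add h2σ, Real.rpow_one,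
        ← Real.sqrt_eq_rpow]
      rw [show (2 : ℝ) * σ ^ 2 = σ ^ 2 * 2 by ring, Real.sqrt_mul (sq_nonneg σ),
        Real.sqrt_sq hσ.le]
      ring
    rw [heven, hsub, integral_div, hgam, hgamval, hpow, hc_def,
      Real.sqrt_mul (by norm_num : (0:ℝ) ≤ 2)]
    ring
  -- integrability facts
  have I0 : Integrable (fun z : ℝ => z ^ 2 * Real.exp (-b * z ^ 2)) := by
    have := integrable_rpow_mul_exp_neg_mul_sq hb (by norm_num : (-1:ℝ) < 2)
    refine this.congr ?_
    filter_upwards with x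
    rw [← Real.rpow_natCast x 2]; norm_num
  have I1 : Integrable (fun y : ℝ => (y - μ) ^ 2 * Real.exp (-b * (y - μ) ^ 2)) :=
    I0.comp_sub_right μ
  have I2 : Integrable (fun y : ℝ => Real.exp (-b * (y - μ) ^ 2)) :=
    (integrable_exp_neg_mul_sq hb).comp_sub_right μ
  -- the gaussian density obtained after the change of variables x = exp y
  set G : ℝ → ℝ := fun y => Real.exp (-b * (y - μ) ^ 2) / c with hG_def
  have hGpos : ∀ y, 0 < G y := fun y => by positivity
  -- restrict the integral to Ioi 0
  have hstep1 : (∫ x, f x * Real.logb 2 (|x| * f x))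
      = ∫ x in Ioi (0:ℝ), f x * Real.logb 2 (|x| * f x) := by
    rw [← integral_indicator measurableSet_Ioi]
    congr 1 with x
    by_cases hx : 0 < x
    · rw [Set.indicator_of_mem (mem_Ioi.mpr hx)]
    · rw [Set.indicator_of_notMem (by simpa using hx)]
      rw [hf x, if_neg hx]
      simp
  -- change of variables x = exp y
  have hstep2 : (∫ x in Ioi (0:ℝ), f x * Real.logb 2 (|x| * f x))
      = ∫ y : ℝ, G y * Real.logb 2 (G y) := by
    have himg : Real.exp '' univ = Ioi (0:ℝ) := by
      rw [image_univ, Real.range_exp]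
    rw [← himg,
      integral_image_eq_integral_abs_deriv_smul MeasurableSet.univ
        (fun x _ => (Real.hasDerivAt_exp x).hasDerivWithinAt)
        (Real.exp_injective.injOn)
        (fun x => f x * Real.logb 2 (|x| * f x)),
      Measure.restrict_univ]
    congr 1 with y
    have hey : (0:ℝ) < Real.exp y := Real.exp_pos y
    have hfe : f (Real.exp y) = G y / Real.exp y := by
      rw [hf, if_pos hey, Real.log_exp, hG_def]
      have : -(y - μ) ^ 2 / (2 * σ ^ 2) = -b * (y - μ) ^ 2 := by
        rw [hb_def]; field_simp
      rw [this]
      field_simp [hc_def]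
      ring
    rw [smul_eq_mul, abs_of_pos hey, hfe]
    have hcan : Real.exp y * (G y / Real.exp y) = G y := by field_simp
    rw [hcan, ← mul_assoc, hcan]
  -- compute the entropy integral
  have hstep3 : (∫ y : ℝ, G y * Real.logb 2 (G y))
      = (-(1/2) - Real.log c) / Real.log 2 := by
    have hrw : (fun y : ℝ => G y * Real.logb 2 (G y))
        = fun y : ℝ => ((-b) * ((y - μ) ^ 2 * Real.exp (-b * (y - μ) ^ 2))
            - Real.log c * Real.exp (-b * (y - μ) ^ 2)) / (c * Real.log 2) := by
      funext y
      rw [Real.logb, hG_def]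
      rw [Real.log_div (Real.exp_ne_zero _) hc.ne', Real.log_exp]
      field_simp
    rw [hrw]
    rw [integral_div, integral_sub ((I1.const_mul _)) (I2.const_mul _),
      integral_const_mul, integral_const_mul]
    have e1 : (∫ y : ℝ, (y - μ) ^ 2 * Real.exp (-b * (y - μ) ^ 2)) = σ ^ 2 * c := by
      rw [integral_sub_right_eq_self (μ := volume)
        (fun z => z ^ 2 * Real.exp (-b * z ^ 2)) μ, hB]
    have e2 : (∫ y : ℝ, Real.exp (-b * (y - μ) ^ 2)) = c := by
      rw [integral_sub_right_eq_self (μ := volume)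
        (fun z => Real.exp (-b * z ^ 2)) μ, hA]
    rw [e1, e2]
    have hbσ : b * σ ^ 2 = 1/2 := by
      rw [hb_def]; field_simp
    rw [show -b * (σ ^ 2 * c) - Real.log c * c = c * (-(1/2) - Real.log c) by
      linear_combination (-c) * hbσ, mul_div_mul_left _ _ hc.ne']
  -- final arithmetic
  rw [hstep1, hstep2, hstep3]
  have hrhs : σ * Real.sqrt (2 * π * Real.exp 1) = c * Real.exp (1/2 : ℝ) := by
    rw [hc_def, Real.sqrt_mul (by positivity : (0:ℝ) ≤ 2 * π),
      show Real.exp (1/2 : ℝ) = Real.exp ((1:ℝ)/2) by norm_num, Real.exp_half]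
    ring
  rw [hrhs, Real.logb, Real.log_mul hc.ne' (Real.exp_ne_zero _), Real.log_exp]
  field_simp
  ring
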